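/- Let R be a finite commutative chain ring, λ ∈ U(R) with λ² = 1, and C an ideal of R^{γ_λ} C_n. Then C is an LCD code (C ∩ C^⊥ = {0}) with respect to the Euclidean inner product if and only if C is generated by an idempotent e with e* = e, where * is the classical involution. -/

import Mathlib

open Finset

/-- Multiplication of the twisted group ring `R^{γ_λ} C_n`, where the cyclic
group `C_n` is identified with `Fin n` (additively), elements are coefficient
vectors `Fin n → R`, and `γ_λ(gⁱ,gʲ) = 1` if `i+j < n`, `λ` if `i+j ≥ n`. -/
def ctMul {R : Type*} [CommRing R] {n : ℕ} (lam : Rˣ) (f h : Fin n → R) :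
    Fin n → R :=
  fun k => ∑ i : Fin n, ∑ j : Fin n,
    if i + j = k then (if (i : ℕ) + (j : ℕ) < n then 1 else (lam : R)) * (f i * h j) else 0

/-- The classical involution on `R^{γ_λ} C_n`: `Σ αᵢ ḡⁱ ↦ Σ αᵢ ḡ⁻ⁱ`
(in coefficient form, using `ḡ⁻ⁱ = λ⁻¹ ḡ^{n-i}` for `i ≠ 0`). -/
def ctStar {R : Type*} [CommRing R] {n : ℕ} [NeZero n] (lam : Rˣ) (f : Fin n → R) :
    Fin n → R :=
  fun j => (if j = 0 then 1 else ((lam⁻¹ : Rˣ) : R)) * f (-j)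

section Helpers
variable {R : Type*} [CommRing R] {n : ℕ} (lam : Rˣ)

def ctGam (lam : Rˣ) (i j : Fin n) : R := if (i : ℕ) + (j : ℕ) < n then 1 else (lam : R)

lemma ctGam_comm (i j : Fin n) : ctGam lam i j = ctGam lam j i := by
  simp [ctGam, Nat.add_comm]

lemma ctGam_zero_left [NeZero n] (j : Fin n) : ctGam lam 0 j = 1 := by
  simp [ctGam, j.isLt]

lemma ctGam_zero_right [NeZero n] (j : Fin n) : ctGam lam j 0 = 1 := by
  simp [ctGam, j.isLt]

lemma ctFin_val_neg [NeZero n] (i : Fin n) (hi : i ≠ 0) : ((-i : Fin n) : ℕ) = n - (i : ℕ) := by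
  have h2 : 0 < (i : ℕ) := by
    rcases Nat.eq_zero_or_pos (i : ℕ) with h | h
    · exact absurd (Fin.ext h) hi
    · exact h
  rw [Fin.neg_def]
  exact Nat.mod_eq_of_lt (by omega)

lemma ctGam_neg [NeZero n] (i : Fin n) (hi : i ≠ 0) : ctGam lam i (-i) = lam := by
  have h1 := ctFin_val_neg i hi
  have h2 : 0 < (i : ℕ) := by
    rcases Nat.eq_zero_or_pos (i : ℕ) with h | h
    · exact absurd (Fin.ext h) hi
    · exact h
  have h3 := i.isLt
  unfold ctGam
  rw [h1, if_neg (by omega)]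

lemma ctGam_cocycle [NeZero n] (i j l : Fin n) :
    ctGam lam i j * ctGam lam (i + j) l = ctGam lam j l * ctGam lam i (j + l) := by
  have hij : ((i + j : Fin n) : ℕ) = ((i : ℕ) + (j : ℕ)) % n := by rw [Fin.add_def]
  have hjl : ((j + l : Fin n) : ℕ) = ((j : ℕ) + (l : ℕ)) % n := by rw [Fin.add_def]
  have hi := i.isLt; have hj := j.isLt; have hl := l.isLt
  have hnpos : 0 < n := Nat.pos_of_ne_zero (NeZero.ne n)
  rcases lt_or_ge ((i : ℕ) + (j : ℕ)) n with h1 | h1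
  · rw [Nat.mod_eq_of_lt h1] at hij
    rcases lt_or_ge ((j : ℕ) + (l : ℕ)) n with h2 | h2
    · rw [Nat.mod_eq_of_lt h2] at hjl
      unfold ctGam; rw [hij, hjl]; split_ifs <;> first | ring1 | (exfalso; omega)
    · have : ((j : ℕ) + (l : ℕ)) % n = (j : ℕ) + (l : ℕ) - n := by
        rw [Nat.mod_eq_sub_mod h2, Nat.mod_eq_of_lt (by omega)]
      rw [this] at hjl
      unfold ctGam; rw [hij, hjl]; split_ifs <;> first | ring1 | (exfalso; omega)
  · have : ((i : ℕ) + (j : ℕ)) % n = (i : ℕ) + (j : ℕ) - n := by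
      rw [Nat.mod_eq_sub_mod h1, Nat.mod_eq_of_lt (by omega)]
    rw [this] at hij
    rcases lt_or_ge ((j : ℕ) + (l : ℕ)) n with h2 | h2
    · rw [Nat.mod_eq_of_lt h2] at hjl
      unfold ctGam; rw [hij, hjl]; split_ifs <;> first | ring1 | (exfalso; omega)
    · have : ((j : ℕ) + (l : ℕ)) % n = (j : ℕ) + (l : ℕ) - n := by
        rw [Nat.mod_eq_sub_mod h2, Nat.mod_eq_of_lt (by omega)]
      rw [this] at hjl
      unfold ctGam; rw [hij, hjl]; split_ifs <;> first | ring1 | (exfalso; omega)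

lemma ctMul_apply [NeZero n] (f h : Fin n → R) (k : Fin n) :
    ctMul lam f h k = ∑ i : Fin n, ctGam lam i (k - i) * (f i * h (k - i)) := by
  unfold ctMul
  refine Finset.sum_congr rfl fun i _ => ?_
  rw [Finset.sum_eq_single (k - i)]
  · rw [if_pos (by abel)]; rfl
  · intro b _ hb
    rw [if_neg]
    intro hc
    exact hb (by rw [eq_sub_iff_add_eq, add_comm]; exact hc)
  · intro hk; exact absurd (Finset.mem_univ _) hk
end Helpers

section Ring
variable {R : Type*} [CommRing R] {n : ℕ} [NeZero n] (lam : Rˣ)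

def ctOne : Fin n → R := fun j => if j = 0 then 1 else 0

lemma ctMul_comm (f g : Fin n → R) : ctMul lam f g = ctMul lam g f := by
  funext k
  rw [ctMul_apply, ctMul_apply]
  refine Fintype.sum_equiv (Equiv.subLeft k) _ _ fun i => ?_
  simp only [Equiv.subLeft_apply]
  rw [sub_sub_cancel, ctGam_comm]
  ring

lemma ctOne_mul (f : Fin n → R) : ctMul lam ctOne f = f := by
  funext k
  rw [ctMul_apply]
  rw [Finset.sum_eq_single 0]
  · rw [ctGam_zero_left, sub_zero]
    simp [ctOne]
  · intro b _ hb
    simp [ctOne, hb]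
  · intro hk; exact absurd (Finset.mem_univ _) hk

lemma ctMul_one (f : Fin n → R) : ctMul lam f ctOne = f := by
  rw [ctMul_comm]; exact ctOne_mul lam f

lemma ctMul_add (f g h : Fin n → R) :
    ctMul lam f (g + h) = ctMul lam f g + ctMul lam f h := by
  funext k
  simp only [ctMul_apply, Pi.add_apply, mul_add, Finset.sum_add_distrib]

lemma ctAdd_mul (f g h : Fin n → R) :
    ctMul lam (f + g) h = ctMul lam f h + ctMul lam g h := by
  rw [ctMul_comm lam (f + g) h, ctMul_add, ctMul_comm lam h f, ctMul_comm lam h g]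

lemma ctMul_zero (f : Fin n → R) : ctMul lam f 0 = 0 := by
  funext k; simp [ctMul_apply]

lemma ctZero_mul (f : Fin n → R) : ctMul lam 0 f = 0 := by
  rw [ctMul_comm]; exact ctMul_zero lam f

lemma ctMul_assoc (f g h : Fin n → R) :
    ctMul lam (ctMul lam f g) h = ctMul lam f (ctMul lam g h) := by
  funext k
  rw [ctMul_apply, ctMul_apply]
  calc
    ∑ i : Fin n, ctGam lam i (k - i) * (ctMul lam f g i * h (k - i))
      = ∑ i : Fin n, ∑ a : Fin n,
          ctGam lam i (k - i) * (ctGam lam a (i - a) * (f a * g (i - a)) * h (k - i)) := by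
        refine Finset.sum_congr rfl fun i _ => ?_
        rw [ctMul_apply, Finset.sum_mul, Finset.mul_sum]
    _ = ∑ a : Fin n, ∑ i : Fin n,
          ctGam lam i (k - i) * (ctGam lam a (i - a) * (f a * g (i - a)) * h (k - i)) :=
        Finset.sum_comm
    _ = ∑ a : Fin n, ∑ b : Fin n,
          ctGam lam (a + b) (k - a - b) * (ctGam lam a b * (f a * g b) * h (k - a - b)) := by
        refine Finset.sum_congr rfl fun a _ => ?_
        refine (Fintype.sum_equiv (Equiv.addLeft a).symm _ _ fun b => ?_)
        simp only [Equiv.addLeft_symm, Equiv.coe_addLeft]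
        rw [show -a + b = b - a from by abel, show a + (b - a) = b from by abel,
          show k - a - (b - a) = k - b from by abel]
    _ = ∑ a : Fin n, ∑ b : Fin n,
          ctGam lam a (k - a) * (f a * (ctGam lam b (k - a - b) * (g b * h (k - a - b)))) := by
        refine Finset.sum_congr rfl fun a _ => Finset.sum_congr rfl fun b _ => ?_
        have key := ctGam_cocycle lam a b (k - a - b)
        rw [show b + (k - a - b) = k - a from by abel] at key
        linear_combination (f a * g b * h (k - a - b)) * key
    _ = ∑ a : Fin n, ctGam lam a (k - a) * (f a * ctMul lam g h (k - a)) := by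
        refine Finset.sum_congr rfl fun a _ => ?_
        rw [ctMul_apply, Finset.mul_sum, Finset.mul_sum]
end Ring

section CTA

def CTA (R : Type*) [CommRing R] (n : ℕ) [NeZero n] (lam : Rˣ) : Type _ := Fin n → R

variable {R : Type*} [CommRing R] {n : ℕ} [NeZero n] {lam : Rˣ}

instance : AddCommGroup (CTA R n lam) := inferInstanceAs (AddCommGroup (Fin n → R))
instance [Finite R] : Finite (CTA R n lam) := inferInstanceAs (Finite (Fin n → R))

instance : CommRing (CTA R n lam) :=
  { (inferInstance : AddCommGroup (CTA R n lam)) with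
    mul := ctMul lam
    one := ctOne
    mul_assoc := ctMul_assoc lam
    one_mul := ctOne_mul lam
    mul_one := ctMul_one lam
    left_distrib := ctMul_add lam
    right_distrib := ctAdd_mul lam
    zero_mul := ctZero_mul lam
    mul_zero := ctMul_zero lam
    mul_comm := ctMul_comm lam }

lemma CTA.mul_def (f g : CTA R n lam) : f * g = ctMul lam f g := rfl

end CTA

section StarLemmas
variable {R : Type*} [CommRing R] {n : ℕ} [NeZero n] (lam : Rˣ)

def ctMu (lam : Rˣ) (j : Fin n) : R := if j = 0 then 1 else lam

lemma units_inv_eq (hlam : (lam : R) * lam = 1) : lam⁻¹ = lam :=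
  inv_eq_of_mul_eq_one_right (Units.ext (by rw [Units.val_mul, hlam, Units.val_one]))

lemma ctStar_apply (hlam : (lam : R) * lam = 1) (f : Fin n → R) (j : Fin n) :
    ctStar lam f j = ctMu lam j * f (-j) := by
  rw [ctStar, units_inv_eq lam hlam]; rfl

lemma ctMu_mul_neg (hlam : (lam : R) * lam = 1) (j : Fin n) :
    ctMu lam j * ctMu lam (-j) = 1 := by
  rcases eq_or_ne j 0 with h | h
  · subst h; simp [ctMu]
  · rw [ctMu, ctMu, if_neg h, if_neg (fun hc => h (neg_eq_zero.mp hc)), hlam]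

lemma star_weight_aux (hlam : (lam : R) * lam = 1) (a s m : ℕ) (h3 : 0 < a)
    (h1 : a < m) (h4 : 0 < s) (h2 : s < m) (hsa : s ≠ a) :
    (lam : R) * (if a + (m - s) < m then 1 else (lam : R)) =
      (if (m - a) + s < m then 1 else (lam : R)) * ((lam : R) * lam) := by
  split_ifs <;> first | (exfalso; omega) | ring1 | (rw [hlam]; try ring1)

lemma star_weight (hlam : (lam : R) * lam = 1) (i j : Fin n) :
    ctMu lam j * ctGam lam i (-(j + i)) =
      ctGam lam (-i) (j + i) * (ctMu lam (-i) * ctMu lam (j + i)) := by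
  rcases eq_or_ne i 0 with hi | hi
  · subst hi
    simp [ctMu, ctGam_zero_left, ctGam_zero_right, mul_comm]
  · rcases eq_or_ne (j + i) 0 with hji | hji
    · obtain rfl : j = -i := eq_neg_of_add_eq_zero_left hji
      rw [hji, neg_zero, ctGam_zero_right, ctGam_zero_right]
      rw [show ctMu lam (0 : Fin n) = 1 from if_pos rfl]
      ring
    · rcases eq_or_ne j 0 with hj | hj
      · subst hj
        rw [zero_add] at *
        rw [show ctMu lam (0 : Fin n) = 1 from if_pos rfl]
        rw [show ctMu lam (-i) = lam from if_neg (fun hc => hi (neg_eq_zero.mp hc))]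
        rw [show ctMu lam i = lam from if_neg hi]
        rw [ctGam_comm lam (-i) i, ctGam_neg lam i hi, hlam]
        ring
      · have hni : (-i : Fin n) ≠ 0 := fun hc => hi (neg_eq_zero.mp hc)
        have hvi := ctFin_val_neg i hi
        have hvs := ctFin_val_neg (j + i) hji
        have hsa : ((j + i : Fin n) : ℕ) ≠ (i : ℕ) := by
          intro hc
          exact hj (by
            have : (j + i : Fin n) = i := Fin.ext hc
            have := add_right_cancel (a := j) (b := i) (c := 0) (by rw [this, zero_add])
            exact this)
        have h1 := i.isLt; have h2 := (j + i).isLt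
        have h3 : 0 < (i : ℕ) := by
          rcases Nat.eq_zero_or_pos (i : ℕ) with h | h
          · exact absurd (Fin.ext h) hi
          · exact h
        have h4 : 0 < ((j + i : Fin n) : ℕ) := by
          rcases Nat.eq_zero_or_pos ((j + i : Fin n) : ℕ) with h | h
          · exact absurd (Fin.ext h) hji
          · exact h
        rw [show ctMu lam j = lam from if_neg hj,
          show ctMu lam (-i) = lam from if_neg hni,
          show ctMu lam (j + i) = lam from if_neg hji]
        rw [ctGam, ctGam, hvi, hvs]
        exact star_weight_aux lam hlam (i : ℕ) ((j + i : Fin n) : ℕ) n h3 h1 h4 h2 hsa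
end StarLemmas

section StarMul
variable {R : Type*} [CommRing R] {n : ℕ} [NeZero n] (lam : Rˣ)

lemma ctStar_mul (hlam : (lam : R) * lam = 1) (f g : Fin n → R) :
    ctStar lam (ctMul lam f g) = ctMul lam (ctStar lam f) (ctStar lam g) := by
  funext j
  rw [ctStar_apply lam hlam, ctMul_apply, ctMul_apply, Finset.mul_sum]
  refine Fintype.sum_equiv (Equiv.neg (Fin n)) _ _ fun i => ?_
  simp only [Equiv.neg_apply]
  rw [ctStar_apply lam hlam, ctStar_apply lam hlam,
    show j - -i = j + i from by abel, show (-j : Fin n) - i = -(j + i) from by abel,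
    neg_neg]
  have key := star_weight lam hlam i j
  linear_combination (f i * g (-(j + i))) * key

lemma ctStar_one (hlam : (lam : R) * lam = 1) :
    ctStar lam (ctOne : Fin n → R) = ctOne := by
  funext j
  rw [ctStar_apply lam hlam]
  rcases eq_or_ne j 0 with h | h
  · subst h; simp [ctMu, ctOne]
  · rw [show (ctOne : Fin n → R) (-j) = 0 from if_neg (fun hc => h (neg_eq_zero.mp hc)),
      show (ctOne : Fin n → R) j = 0 from if_neg h, mul_zero]

lemma ctStar_add (f g : Fin n → R) :
    ctStar lam (f + g) = ctStar lam f + ctStar lam g := by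
  funext j; simp [ctStar, mul_add]

lemma ctStar_invol (hlam : (lam : R) * lam = 1) (f : Fin n → R) :
    ctStar lam (ctStar lam f) = f := by
  funext j
  rw [ctStar_apply lam hlam, ctStar_apply lam hlam, neg_neg, ← mul_assoc,
    ctMu_mul_neg lam hlam, one_mul]

/-- The Euclidean form as a product coefficient. -/
lemma form_eq (hlam : (lam : R) * lam = 1) (x c : Fin n → R) :
    ∑ i : Fin n, x i * c i = ctMul lam x (ctStar lam c) 0 := by
  rw [ctMul_apply]
  refine Finset.sum_congr rfl fun i _ => ?_
  rw [ctStar_apply lam hlam, zero_sub, neg_neg]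
  rcases eq_or_ne i 0 with h | h
  · subst h
    rw [neg_zero, ctGam_zero_right, show ctMu lam (0 : Fin n) = 1 from if_pos rfl]
    ring
  · rw [ctGam_neg lam i h, show ctMu lam (-i) = (lam : R) from
      if_neg (fun hc => h (neg_eq_zero.mp hc))]
    linear_combination (-(x i * c i)) * hlam
end StarMul

section Aux

/-- Powers of an ideal in a ring with finitely many ideals stabilize. -/
lemma exists_pow_stab {A : Type*} [CommRing A] (hfin : Finite (Ideal A)) (I : Ideal A) :
    ∃ k : ℕ, 0 < k ∧ ∀ m, k ≤ m → I ^ m = I ^ k := by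
  obtain ⟨a, b, hne, heq⟩ := Finite.exists_ne_map_eq_of_infinite (fun j : ℕ => I ^ (j + 1))
  wlog hab : a < b generalizing a b
  · exact this b a hne.symm heq.symm (by omega)
  have hstep : I ^ (a + 1 + 1) = I ^ (a + 1) := by
    refine le_antisymm (Ideal.pow_le_pow_right (by omega)) ?_
    calc I ^ (a + 1) = I ^ (b + 1) := heq
      _ ≤ I ^ (a + 1 + 1) := Ideal.pow_le_pow_right (by omega)
  refine ⟨a + 1, by omega, ?_⟩
  intro m hm
  obtain ⟨d, rfl⟩ : ∃ d, m = (a + 1) + d := ⟨m - (a + 1), by omega⟩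
  clear hm
  induction d with
  | zero => rfl
  | succ d ih =>
    calc I ^ (a + 1 + (d + 1)) = I ^ (a + 1 + d) * I := by
          rw [show a + 1 + (d + 1) = (a + 1 + d) + 1 from rfl, pow_succ]
      _ = I ^ (a + 1) * I := by rw [ih]
      _ = I ^ (a + 1 + 1) := by rw [← pow_succ]
      _ = I ^ (a + 1) := hstep

/-- An idempotent-like generator for the stable power of an ideal. -/
lemma exists_partial_identity {A : Type*} [CommRing A] [Finite A] (I : Ideal A) :
    ∃ (k : ℕ) (f : A), 0 < k ∧ (∀ m, k ≤ m → I ^ m = I ^ k) ∧ f ∈ I ^ k ∧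
      (∀ x ∈ I ^ k, f * x = x) := by
  have hfin : Finite (Ideal A) :=
    Finite.of_injective (fun J : Ideal A => (J : Set A)) SetLike.coe_injective
  obtain ⟨k, hk, hstab⟩ := exists_pow_stab hfin I
  have hfg : (I ^ k).FG := by
    refine Submodule.fg_def.mpr ⟨((I ^ k : Ideal A) : Set A), Set.toFinite _, Submodule.span_eq _⟩
  have hle : (I ^ k : Submodule A A) ≤ (I ^ k) • (I ^ k : Submodule A A) := by
    rw [Ideal.smul_eq_mul, ← pow_add]
    rw [hstab (k + k) (by omega)]
  obtain ⟨r, hr1, hr0⟩ :=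
    Submodule.exists_sub_one_mem_and_smul_eq_zero_of_fg_of_le_smul (I ^ k) (I ^ k) hfg hle
  refine ⟨k, 1 - r, hk, hstab, ?_, ?_⟩
  · simpa using (I ^ k).neg_mem hr1
  · intro x hx
    have h0 : r * x = 0 := hr0 x hx
    calc (1 - r) * x = x - r * x := by ring
      _ = x := by rw [h0, sub_zero]

end Aux

section Main
variable {R : Type*} [CommRing R] {n : ℕ} [NeZero n] (lam : Rˣ)

/-- The classical involution as a ring homomorphism of the twisted group ring. -/
def ctStarHom (hlam : (lam : R) * lam = 1) : CTA R n lam →+* CTA R n lam where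
  toFun := ctStar lam
  map_one' := ctStar_one lam hlam
  map_mul' := ctStar_mul lam hlam
  map_zero' := by
    funext j
    show (if j = 0 then (1 : R) else ((lam⁻¹ : Rˣ) : R)) * (0 : R) = (0 : R)
    rw [mul_zero]
  map_add' := ctStar_add lam

/-- An `R`-submodule closed under `ctMul` is an ideal of the twisted group ring. -/
def toCTAIdeal (C : Submodule R (Fin n → R))
    (hC : ∀ x : Fin n → R, ∀ c ∈ C, ctMul lam x c ∈ C) : Ideal (CTA R n lam) where
  carrier := (C : Set (Fin n → R))
  add_mem' := fun ha hb => C.add_mem ha hb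
  zero_mem' := C.zero_mem
  smul_mem' := fun a x hx => hC a x hx

def ctDelta (k : Fin n) : Fin n → R := fun i => if i = k then 1 else 0

lemma sum_mul_ctDelta (x : Fin n → R) (k : Fin n) :
    ∑ i : Fin n, x i * ctDelta k i = x k := by
  rw [Finset.sum_eq_single k]
  · simp [ctDelta]
  · intro b _ hb; simp [ctDelta, hb]
  · intro hk; exact absurd (Finset.mem_univ _) hk

lemma descent {A : Type*} [CommRing A] (I : Ideal A) (f : A) (t : ℕ)
    (ht : (nilradical A) ^ t = 0) :
    ∀ e : ℕ, ∀ z : A, z ∈ I → (∃ c ∈ I, z = (1 - f) * c) → z ≠ 0 →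
      (∀ m ∈ (nilradical A) ^ e, z * m = 0) →
      ∃ z', z' ∈ I ∧ (∃ c ∈ I, z' = (1 - f) * c) ∧ z' ≠ 0 ∧
        ∀ m ∈ nilradical A, z' * m = 0 := by
  intro e
  induction e with
  | zero =>
    intro z hzI hform hz0 hann
    exfalso
    apply hz0
    have h1 : (1 : A) ∈ (nilradical A) ^ 0 := by rw [pow_zero, Ideal.one_eq_top]; trivial
    simpa using hann 1 h1
  | succ e ih =>
    intro z hzI hform hz0 hann
    by_cases hall : ∀ m ∈ nilradical A, z * m = 0
    · exact ⟨z, hzI, hform, hz0, hall⟩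
    · push_neg at hall
      obtain ⟨m, hm, hzm⟩ := hall
      obtain ⟨c, hcI, hzc⟩ := hform
      refine ih (z * m) (I.mul_mem_right m hzI) ⟨c * m, I.mul_mem_right m hcI, by rw [hzc]; ring⟩
        hzm ?_
      intro m' hm'
      rw [mul_assoc]
      exact hann (m * m') (by rw [pow_succ']; exact Ideal.mul_mem_mul hm hm')

end Main


/-- Over a finite commutative chain ring `R` with `char(R/J(R)) ∤ n` and
`λ² = 1`, an ideal `C` of `R^{γ_λ} C_n` is an LCD code for the Euclidean inner
product (`C ∩ C^⊥ = {0}`) iff `C` is generated by an idempotent `e` with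
`e* = e`. -/
theorem euclidean_LCD_iff_idempotent {R : Type*} [CommRing R]
    [Fintype R] [IsLocalRing R]
    (hchain : (IsLocalRing.maximalIdeal R).IsPrincipal)
    {n : ℕ} [NeZero n]
    (hn : ¬ (ringChar (IsLocalRing.ResidueField R) ∣ n))
    (lam : Rˣ) (hlam : (lam : R) ^ 2 = 1)
    (C : Submodule R (Fin n → R))
    (hC : ∀ x : Fin n → R, ∀ c ∈ C, ctMul lam x c ∈ C) :
    (∀ x ∈ C, (∀ c ∈ C, ∑ i : Fin n, x i * c i = 0) → x = 0) ↔
      ∃ e : Fin n → R, ctMul lam e e = e ∧ ctStar lam e = e ∧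
        (∀ x, x ∈ C ↔ ∃ a : Fin n → R, x = ctMul lam a e) := by

  have hl : (lam : R) * lam = 1 := by rw [← pow_two]; exact hlam
  set A := CTA R n lam with hA
  let S : A →+* A := ctStarHom lam hl
  have hSdef : ∀ y : A, S y = ctStar lam y := fun _ => rfl
  have hSS : ∀ y : A, S (S y) = y := fun y => ctStar_invol lam hl y
  let I : Ideal A := toCTAIdeal lam C hC
  have hmemI : ∀ x : A, x ∈ I ↔ x ∈ C := fun _ => Iff.rfl
  have hmul : ∀ f g : A, f * g = ctMul lam f g := fun _ _ => rfl
  constructor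
  · -- LCD → idempotent generator
    intro hLCD
    have hLCD' : ∀ w : A, w ∈ I → (∀ c : A, c ∈ I → w * S c = 0) → w = 0 := by
      intro w hw h0
      refine hLCD w ((hmemI w).mp hw) ?_
      intro c hc
      rw [form_eq lam hl w c]
      have h1 := h0 c ((hmemI c).mpr hc)
      rw [hmul] at h1
      exact congrFun h1 0
    obtain ⟨k, f, hk, hstab, hfmem, habs⟩ := exists_partial_identity (A := A) I
    have hff : f * f = f := habs f hfmem
    have hfI : f ∈ I := Ideal.pow_le_self (by omega : k ≠ 0) hfmem
    have hnil : ∀ c ∈ I, IsNilpotent ((1 - f) * c) := by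
      intro c hc
      obtain ⟨k', rfl⟩ : ∃ k', k = k' + 1 := ⟨k - 1, by omega⟩
      refine ⟨k' + 1, ?_⟩
      have h0 : (1 - f) * c ^ (k' + 1) = 0 := by
        have h1 := habs (c ^ (k' + 1)) (Ideal.pow_mem_pow hc (k' + 1))
        rw [sub_mul, one_mul, h1, sub_self]
      rw [mul_pow, pow_succ, mul_assoc, h0, mul_zero]
    obtain ⟨t, ht⟩ := IsNoetherianRing.isNilpotent_nilradical A
    have hNzero : ∀ c ∈ I, (1 - f) * c = 0 := by
      by_contra hcon
      push_neg at hcon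
      obtain ⟨c0, hc0I, hz0⟩ := hcon
      obtain ⟨z, hzI, ⟨c, hcI, hzc⟩, hzne, hzann⟩ :=
        descent I f t ht t ((1 - f) * c0) (I.mul_mem_left (1 - f) hc0I)
          ⟨c0, hc0I, rfl⟩ hz0
          (by intro m hm; rw [ht] at hm
              rw [show m = 0 from by simpa using hm, mul_zero])
      have hzf0 : z * f = 0 := by
        rw [hzc]; linear_combination (-c) * hff
      by_cases hzf : z * S f = z
      · have hw0 : ∀ c' : A, c' ∈ I → S z * S c' = 0 := by
          intro c' hc'
          have h1 : z * c' = 0 := by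
            have e1 : z * (f * c') = 0 := by
              rw [show z * (f * c') = z * f * c' from by ring, hzf0, zero_mul]
            have e2 : z * ((1 - f) * c') = 0 :=
              hzann _ (mem_nilradical.mpr (hnil c' hc'))
            calc z * c' = z * (f * c') + z * ((1 - f) * c') := by ring
              _ = 0 := by rw [e1, e2, add_zero]
          rw [← map_mul, h1, map_zero]
        have hwI : S z ∈ I := by
          have h2 : S z = f * S z := by
            conv_lhs => rw [← hzf]
            rw [map_mul, hSS f]
            ring
          rw [h2]
          exact I.mul_mem_right (S z) hfI
        have h3 : S z = 0 := hLCD' (S z) hwI hw0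
        exact hzne (by rw [← hSS z, h3, map_zero])
      · have hwne : z - z * S f ≠ 0 := fun hcc => hzf (sub_eq_zero.mp hcc).symm
        have hwI : z - z * S f ∈ I := I.sub_mem hzI (I.mul_mem_right (S f) hzI)
        have hSfSf : S f * S f = S f := by rw [← map_mul, hff]
        have hw0 : ∀ c' : A, c' ∈ I → (z - z * S f) * S c' = 0 := by
          intro c' hc'
          have hdec : c' = f * c' + (1 - f) * c' := by ring
          have e1 : (z - z * S f) * S (f * c') = 0 := by
            rw [map_mul]
            calc (z - z * S f) * (S f * S c') = (z * S f - z * (S f * S f)) * S c' := by ring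
              _ = 0 := by rw [hSfSf]; ring
          have e2 : (z - z * S f) * S ((1 - f) * c') = 0 := by
            have hmem : S ((1 - f) * c') ∈ nilradical A :=
              mem_nilradical.mpr ((hnil c' hc').map S)
            have h4 := hzann _ hmem
            calc (z - z * S f) * S ((1 - f) * c')
                = z * S ((1 - f) * c') - z * S ((1 - f) * c') * S f := by ring
              _ = 0 := by rw [h4]; ring
          calc (z - z * S f) * S c'
              = (z - z * S f) * S (f * c' + (1 - f) * c') := by rw [← hdec]
            _ = (z - z * S f) * S (f * c') + (z - z * S f) * S ((1 - f) * c') := by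
                rw [map_add, mul_add]
            _ = 0 := by rw [e1, e2, add_zero]
        exact hwne (hLCD' _ hwI hw0)
    have hCf : ∀ c : A, c ∈ I → f * c = c := by
      intro c hc
      have h1 : c - f * c = 0 := by rw [← hNzero c hc]; ring
      exact (eq_of_sub_eq_zero h1).symm
    have hfs : f * S f = f := by
      have hwI : f - f * S f ∈ I := I.sub_mem hfI (I.mul_mem_right (S f) hfI)
      have hSfSf : S f * S f = S f := by rw [← map_mul, hff]
      have hw0 : ∀ c : A, c ∈ I → (f - f * S f) * S c = 0 := by
        intro c hc
        rw [show c = f * c from (hCf c hc).symm, map_mul]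
        calc (f - f * S f) * (S f * S c) = (f * S f - f * (S f * S f)) * S c := by ring
          _ = 0 := by rw [hSfSf]; ring
      have h1 := hLCD' _ hwI hw0
      exact (eq_of_sub_eq_zero h1).symm
    have hsf : S f = f := by
      have h2 : S f * f = S f := by
        have h3 := congrArg S hfs
        rwa [map_mul, hSS f] at h3
      calc S f = S f * f := h2.symm
        _ = f * S f := by ring
        _ = f := hfs
    refine ⟨f, ?_, ?_, ?_⟩
    · rw [← hmul]; exact hff
    · rw [← hSdef]; exact hsf
    · intro x
      constructor
      · intro hx
        refine ⟨x, ?_⟩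
        show (show A from x) = (show A from x) * f
        rw [mul_comm]
        exact (hCf x ((hmemI x).mpr hx)).symm
      · rintro ⟨a, rfl⟩
        exact hC a f ((hmemI f).mp hfI)
  · rintro ⟨e, hee, hse, hgen⟩ x hxC hperp
    let e' : A := e
    let x' : A := x
    have hee' : e' * e' = e' := hee
    have hse' : S e' = e' := hse
    obtain ⟨a, ha⟩ := (hgen x).mp hxC
    let a' : A := a
    have hxa : x' = a' * e' := ha
    have hxe : x' * e' = x' := by rw [hxa, mul_assoc, hee']
    funext k
    have hck : ctMul lam (ctDelta k) e ∈ C := (hgen _).mpr ⟨ctDelta k, rfl⟩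
    have h0 := hperp _ hck
    rw [form_eq lam hl] at h0
    let d' : A := ctDelta k
    have e1 : x' * S (d' * e') = x' * S d' := by
      rw [map_mul, hse']
      calc x' * (S d' * e') = (x' * e') * S d' := by ring
        _ = x' * S d' := by rw [hxe]
    have h2 : ctMul lam x (ctStar lam (ctMul lam (ctDelta k) e)) =
        ctMul lam x (ctStar lam (ctDelta k)) := e1
    rw [h2, ← form_eq lam hl, sum_mul_ctDelta] at h0
    exact h0
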